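/- Under the assumptions that W_m ⊂ cl(Range T), Range(Q_m T_h) = W_m, ‖Q_m(T − T_h)‖ ≤ h, and ‖Q_m(y − y^δ)‖ ≤ δ, the fully discretized iterated Tikhonov approximation x_{α,m,i}^{δ,h} := ∑_{k=1}^i α^{k-1}(T_{h,m}* T_{h,m} + αI)^{-k} T_{h,m}* y^δ with T_{h,m} := Q_m T_h satisfies ‖x† − x_{α,m,i}^{δ,h}‖ ≤ α^i ‖(T_m* T_m + αI)^{-i} x†‖ + (i(i+1) h ‖x†‖ + i δ)/(2√α), where T_m := Q_m T. -/

import Mathlib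

open ContinuousLinearMap RealInnerProductSpace

set_option maxHeartbeats 1600000
set_option synthInstance.maxHeartbeats 400000

section helpers

variable {X Y : Type*} [NormedAddCommGroup X] [InnerProductSpace ℝ X] [CompleteSpace X]
  [NormedAddCommGroup Y] [InnerProductSpace ℝ Y] [CompleteSpace Y]

lemma tik_apply (S : X →L[ℝ] Y) (α : ℝ) (B : X →L[ℝ] X)
    (hB₂ : (adjoint S ∘L S + α • 1) * B = 1) (x : X) :
    adjoint S (S (B x)) + α • B x = x := by
  have h := congrArg (fun f : X →L[ℝ] X => f x) hB₂
  simpa [ContinuousLinearMap.mul_apply, ContinuousLinearMap.add_apply,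
    ContinuousLinearMap.comp_apply, ContinuousLinearMap.smul_apply,
    ContinuousLinearMap.one_apply] using h

lemma tik_key (S : X →L[ℝ] Y) (α : ℝ) (B : X →L[ℝ] X)
    (hB₂ : (adjoint S ∘L S + α • 1) * B = 1) (x : X) :
    ‖S (B x)‖ ^ 2 + α * ‖B x‖ ^ 2 ≤ ‖x‖ * ‖B x‖ := by
  have h0 := tik_apply S α B hB₂ x
  have h1 : ⟪adjoint S (S (B x)) + α • B x, B x⟫ = ‖S (B x)‖ ^ 2 + α * ‖B x‖ ^ 2 := by
    rw [inner_add_left, real_inner_smul_left, adjoint_inner_left,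
      real_inner_self_eq_norm_sq, real_inner_self_eq_norm_sq]
  rw [h0] at h1
  rw [← h1]
  exact real_inner_le_norm _ _

lemma tik_normB (S : X →L[ℝ] Y) (α : ℝ) (hα : 0 < α) (B : X →L[ℝ] X)
    (hB₂ : (adjoint S ∘L S + α • 1) * B = 1) (x : X) :
    α * ‖B x‖ ≤ ‖x‖ := by
  have hk := tik_key S α B hB₂ x
  rcases eq_or_ne (B x) 0 with h0 | h0
  · simp [h0, norm_nonneg]
  · have hn : 0 < ‖B x‖ := norm_pos_iff.mpr h0
    nlinarith [sq_nonneg ‖S (B x)‖]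

lemma tik_normSB (S : X →L[ℝ] Y) (α : ℝ) (hα : 0 < α) (B : X →L[ℝ] X)
    (hB₂ : (adjoint S ∘L S + α • 1) * B = 1) (x : X) :
    2 * Real.sqrt α * ‖S (B x)‖ ≤ ‖x‖ := by
  have hk := tik_key S α B hB₂ x
  have hs : Real.sqrt α ^ 2 = α := Real.sq_sqrt hα.le
  have hs0 : 0 < Real.sqrt α := Real.sqrt_pos.mpr hα
  rcases eq_or_ne (B x) 0 with h0 | h0
  · simp [h0, norm_nonneg]
  · have hn : 0 < ‖B x‖ := norm_pos_iff.mpr h0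
    nlinarith [two_mul_le_add_sq ‖S (B x)‖ (Real.sqrt α * ‖B x‖), sq_nonneg ‖S (B x)‖]

lemma tik_normC (S : X →L[ℝ] Y) (α : ℝ) (hα : 0 < α) (B : X →L[ℝ] X)
    (hB₂ : (adjoint S ∘L S + α • 1) * B = 1) (x : X) :
    ‖x - α • B x‖ ≤ ‖x‖ := by
  have h0 := tik_apply S α B hB₂ x
  have hv : x - α • B x = adjoint S (S (B x)) := (eq_sub_of_add_eq h0).symm
  have hx2 : ‖x‖ ^ 2 = ‖adjoint S (S (B x))‖ ^ 2 + 2 * (α * ‖S (B x)‖ ^ 2)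
      + α ^ 2 * ‖B x‖ ^ 2 := by
    conv_lhs => rw [← h0]
    rw [norm_add_sq_real]
    rw [real_inner_smul_right, adjoint_inner_left, real_inner_self_eq_norm_sq,
      norm_smul]
    rw [Real.norm_eq_abs, abs_of_pos hα]
    ring
  rw [hv]
  nlinarith [norm_nonneg (adjoint S (S (B x))), norm_nonneg x, sq_nonneg (α * ‖B x‖),
    sq_nonneg ‖S (B x)‖, sq_nonneg (‖x‖ - ‖adjoint S (S (B x))‖)]

lemma tik_Badj (S : X →L[ℝ] Y) (α : ℝ) (B : X →L[ℝ] X)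
    (hB₂ : (adjoint S ∘L S + α • 1) * B = 1) :
    adjoint B = B := by
  have happ : ∀ z : X, adjoint S (S (B z)) + α • B z = z := by
    intro z
    have h := congrArg (fun f : X →L[ℝ] X => f z) hB₂
    simpa [ContinuousLinearMap.mul_apply, ContinuousLinearMap.add_apply,
      ContinuousLinearMap.comp_apply, ContinuousLinearMap.smul_apply,
      ContinuousLinearMap.one_apply] using h
  have hsym : ∀ u v : X, ⟪B u, v⟫ = ⟪u, B v⟫ := by
    intro u v
    have h1 : ⟪B u, v⟫ = ⟪B u, adjoint S (S (B v)) + α • B v⟫ := by rw [happ v]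
    have h2 : ⟪u, B v⟫ = ⟪adjoint S (S (B u)) + α • B u, B v⟫ := by rw [happ u]
    rw [h1, h2, inner_add_right, inner_add_left, real_inner_smul_right,
      real_inner_smul_left, adjoint_inner_right, adjoint_inner_left]
  exact ((eq_adjoint_iff B B).mpr hsym).symm

lemma norm_adjoint_eq (A : X →L[ℝ] Y) : ‖adjoint A‖ = ‖A‖ :=
  (ContinuousLinearMap.adjoint : (X →L[ℝ] Y) ≃ₗᵢ⋆[ℝ] (Y →L[ℝ] X)).norm_map A

lemma tik_normBS (S : X →L[ℝ] Y) (α : ℝ) (hα : 0 < α) (B : X →L[ℝ] X)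
    (hB₂ : (adjoint S ∘L S + α • 1) * B = 1) (z : Y) :
    2 * Real.sqrt α * ‖B (adjoint S z)‖ ≤ ‖z‖ := by
  have hs0 : 0 < Real.sqrt α := Real.sqrt_pos.mpr hα
  have hc : (0:ℝ) < 2 * Real.sqrt α := by positivity
  have hop : ‖S ∘L B‖ ≤ (2 * Real.sqrt α)⁻¹ := by
    apply ContinuousLinearMap.opNorm_le_bound _ (by positivity)
    intro x
    rw [ContinuousLinearMap.comp_apply, inv_mul_eq_div, le_div_iff₀ hc]
    calc ‖S (B x)‖ * (2 * Real.sqrt α) = 2 * Real.sqrt α * ‖S (B x)‖ := by ring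
    _ ≤ ‖x‖ := tik_normSB S α hα B hB₂ x
  have hadj : adjoint (S ∘L B) = B ∘L adjoint S := by
    rw [adjoint_comp, tik_Badj S α B hB₂]
  have hop2 : ‖B ∘L adjoint S‖ ≤ (2 * Real.sqrt α)⁻¹ := by
    rw [← hadj]; rw [norm_adjoint_eq]; exact hop
  have := (B ∘L adjoint S).le_opNorm z
  rw [ContinuousLinearMap.comp_apply] at this
  calc 2 * Real.sqrt α * ‖B (adjoint S z)‖ ≤ 2 * Real.sqrt α * (‖B ∘L adjoint S‖ * ‖z‖) := by
        apply mul_le_mul_of_nonneg_left this hc.le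
  _ ≤ 2 * Real.sqrt α * ((2 * Real.sqrt α)⁻¹ * ‖z‖) := by
        apply mul_le_mul_of_nonneg_left (mul_le_mul_of_nonneg_right hop2 (norm_nonneg _)) hc.le
  _ = ‖z‖ := by field_simp

lemma tik_normBpow (S : X →L[ℝ] Y) (α : ℝ) (hα : 0 < α) (B : X →L[ℝ] X)
    (hB₂ : (adjoint S ∘L S + α • 1) * B = 1) (k : ℕ) (x : X) :
    α ^ k * ‖(B ^ k) x‖ ≤ ‖x‖ := by
  induction k generalizing x with
  | zero => simp
  | succ k ih =>
    have h1 : (B ^ (k + 1)) x = (B ^ k) (B x) := by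
      rw [pow_succ, ContinuousLinearMap.mul_apply]
    calc α ^ (k + 1) * ‖(B ^ (k + 1)) x‖ = α * (α ^ k * ‖(B ^ k) (B x)‖) := by
          rw [h1]; ring
    _ ≤ α * ‖B x‖ := mul_le_mul_of_nonneg_left (ih (B x)) hα.le
    _ ≤ ‖x‖ := tik_normB S α hα B hB₂ x


lemma tik_phi (R S : X →L[ℝ] Y) (α : ℝ) (Bm Bhm : X →L[ℝ] X)
    (hBm₂ : (adjoint R ∘L R + α • 1) * Bm = 1)
    (hBhm₁ : Bhm * (adjoint S ∘L S + α • 1) = 1)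
    (hBhm₂ : (adjoint S ∘L S + α • 1) * Bhm = 1)
    (hBm₁ : Bm * (adjoint R ∘L R + α • 1) = 1) (k : ℕ) :
    Bm ^ (k+1) * (adjoint R ∘L R) - Bhm ^ (k+1) * (adjoint S ∘L R) =
      -∑ j ∈ Finset.range k, Bhm ^ (j+1) *
          ((adjoint R ∘L R - adjoint S ∘L S) * (Bm ^ (k-j) * ((adjoint R ∘L R) * Bm)))
        - Bhm ^ (k+1) * ((adjoint S ∘L (R - S)) * ((adjoint R ∘L R) * Bm))
        + α • (Bhm ^ (k+1) * ((adjoint (R - S) ∘L R) * Bm)) := by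
  set RR := adjoint R ∘L R with hRRdef
  set SS := adjoint S ∘L S with hSSdef
  set K := RR - SS with hKdef
  set SmR := adjoint S ∘L (R - S) with hSmRdef
  set RmS := adjoint (R - S) ∘L R with hRmSdef
  have hsm : ∀ G : X →L[ℝ] X, (α • (1 : X →L[ℝ] X)) * G = α • G := fun G => by
    ext x
    simp only [ContinuousLinearMap.mul_apply, ContinuousLinearMap.smul_apply,
      ContinuousLinearMap.one_apply]
  have hsm' : ∀ G : X →L[ℝ] X, G * (α • (1 : X →L[ℝ] X)) = α • G := fun G => by
    ext x
    simp only [ContinuousLinearMap.mul_apply, ContinuousLinearMap.smul_apply,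
      ContinuousLinearMap.one_apply, map_smul]
  have hms : ∀ F G : X →L[ℝ] X, F * (α • G) = α • (F * G) := fun F G => by
    ext x
    simp only [ContinuousLinearMap.mul_apply, ContinuousLinearMap.smul_apply, map_smul]
  have hf1 : Bm * RR = 1 - α • Bm := by
    have h := hBm₁; rw [mul_add, hsm'] at h; exact eq_sub_of_add_eq h
  have hf2 : RR * Bm = 1 - α • Bm := by
    have h := hBm₂; rw [add_mul, hsm] at h; exact eq_sub_of_add_eq h
  have hf3 : Bhm * SS = 1 - α • Bhm := by
    have h := hBhm₁; rw [mul_add, hsm'] at h; exact eq_sub_of_add_eq h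
  have hKsplit : K = SmR + RmS := by
    rw [hKdef, hSmRdef, hRmSdef, comp_sub, map_sub, sub_comp, hRRdef, hSSdef]
    abel
  have hN : Bm - Bhm = -(Bhm * (K * Bm)) := by
    have e1 : Bm = Bhm * ((SS + α • 1) * Bm) := by rw [← mul_assoc, hBhm₁, one_mul]
    have e2 : Bhm = Bhm * ((RR + α • 1) * Bm) := by rw [hBm₂, mul_one]
    have e3 : Bhm * ((SS + α • 1) * Bm) - Bhm * ((RR + α • 1) * Bm)
        = -(Bhm * (K * Bm)) := by
      have hKBm : K * Bm = RR * Bm - SS * Bm := sub_mul _ _ _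
      rw [add_mul, add_mul, hsm, mul_add, mul_add, hms, hKBm, mul_sub]
      abel
    calc Bm - Bhm = Bhm * ((SS + α • 1) * Bm) - Bhm * ((RR + α • 1) * Bm) := by
          rw [← e1, ← e2]
    _ = -(Bhm * (K * Bm)) := e3
  have hD : ∀ n : ℕ, Bm ^ n - Bhm ^ n
      = -∑ j ∈ Finset.range n, Bhm ^ (j+1) * (K * Bm ^ (n-j)) := by
    intro n
    induction n with
    | zero => simp
    | succ n ih =>
      have hstep : Bm ^ (n+1) - Bhm ^ (n+1)
          = (Bm ^ n - Bhm ^ n) * Bm + Bhm ^ n * (Bm - Bhm) := by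
        rw [sub_mul, mul_sub, pow_succ, pow_succ]; abel
      rw [hstep, ih, hN, Finset.sum_range_succ]
      have h1 : (∑ j ∈ Finset.range n, Bhm ^ (j+1) * (K * Bm ^ (n-j))) * Bm
          = ∑ j ∈ Finset.range n, Bhm ^ (j+1) * (K * Bm ^ (n+1-j)) := by
        rw [Finset.sum_mul]
        refine Finset.sum_congr rfl (fun j hj => ?_)
        have hj' : j ≤ n := (Finset.mem_range.mp hj).le
        rw [mul_assoc, mul_assoc, ← pow_succ, ← Nat.sub_add_comm hj']
      have h2 : Bhm ^ n * (Bhm * (K * Bm)) = Bhm ^ (n+1) * (K * Bm ^ (n+1-n)) := by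
        have hn1 : n + 1 - n = 1 := by omega
        rw [hn1, pow_one, pow_succ, mul_assoc]
      rw [neg_mul, h1, mul_neg, h2, neg_add]
  -- step identities
  have step1 : Bm ^ (k+1) * RR = Bm ^ k - α • Bm ^ (k+1) := by
    rw [pow_succ, mul_assoc, hf1, mul_sub, mul_one, hms, ← pow_succ]
  have step2 : Bhm ^ (k+1) * SS = Bhm ^ k - α • Bhm ^ (k+1) := by
    rw [pow_succ, mul_assoc, hf3, mul_sub, mul_one, hms, ← pow_succ]
  have hSR : (adjoint S ∘L R) = SS + SmR := by
    rw [hSSdef, hSmRdef, comp_sub]; abel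
  have hpair : ∀ j ∈ Finset.range k, Bhm ^ (j+1) * (K * (Bm ^ (k-j) * (RR * Bm)))
      = Bhm ^ (j+1) * (K * Bm ^ (k-j)) - α • (Bhm ^ (j+1) * (K * Bm ^ (k+1-j))) := by
    intro j hj
    have hj' : j ≤ k := (Finset.mem_range.mp hj).le
    have hCe : Bm ^ (k-j) * (RR * Bm) = Bm ^ (k-j) - α • Bm ^ (k+1-j) := by
      rw [hf2, mul_sub, mul_one, hms, ← pow_succ, ← Nat.sub_add_comm hj']
    rw [hCe, mul_sub, hms, mul_sub, hms]
  have hbd : Bhm ^ (k+1) * (SmR * (RR * Bm))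
      = Bhm ^ (k+1) * SmR - α • (Bhm ^ (k+1) * (SmR * Bm)) := by
    have : SmR * (RR * Bm) = SmR - α • (SmR * Bm) := by
      rw [hf2, mul_sub, mul_one, hms]
    rw [this, mul_sub, hms]
  have hKB : Bhm ^ (k+1) * (K * Bm)
      = Bhm ^ (k+1) * (SmR * Bm) + Bhm ^ (k+1) * (RmS * Bm) := by
    rw [hKsplit, add_mul, mul_add]
  have e2 : Bm ^ (k+1) - Bhm ^ (k+1)
      = -(∑ j ∈ Finset.range k, Bhm ^ (j+1) * (K * Bm ^ (k+1-j))
          + Bhm ^ (k+1) * (K * Bm)) := by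
    have hk1 : k + 1 - k = 1 := by omega
    rw [hD (k+1), Finset.sum_range_succ, hk1, pow_one]
  have e3 : ∑ j ∈ Finset.range k, Bhm ^ (j+1) * (K * (Bm ^ (k-j) * (RR * Bm)))
      = ∑ j ∈ Finset.range k, Bhm ^ (j+1) * (K * Bm ^ (k-j))
        - α • ∑ j ∈ Finset.range k, Bhm ^ (j+1) * (K * Bm ^ (k+1-j)) := by
    rw [Finset.sum_congr rfl hpair, Finset.sum_sub_distrib, Finset.smul_sum]
  calc Bm ^ (k+1) * RR - Bhm ^ (k+1) * (adjoint S ∘L R)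
      = (Bm ^ k - Bhm ^ k) - α • (Bm ^ (k+1) - Bhm ^ (k+1)) - Bhm ^ (k+1) * SmR := by
        rw [hSR, mul_add, step1, step2, smul_sub]; abel
  _ = -(∑ j ∈ Finset.range k, Bhm ^ (j+1) * (K * Bm ^ (k-j)))
        - α • (-(∑ j ∈ Finset.range k, Bhm ^ (j+1) * (K * Bm ^ (k+1-j))
          + Bhm ^ (k+1) * (K * Bm))) - Bhm ^ (k+1) * SmR := by
        rw [hD k, e2]
  _ = -∑ j ∈ Finset.range k, Bhm ^ (j+1) * (K * (Bm ^ (k-j) * (RR * Bm)))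
        - Bhm ^ (k+1) * (SmR * (RR * Bm)) + α • (Bhm ^ (k+1) * (RmS * Bm)) := by
        rw [e3, hbd, hKB]
        simp only [smul_neg, smul_add, smul_sub]
        abel

lemma tik_step1 (R : X →L[ℝ] Y) (α : ℝ) (Bm : X →L[ℝ] X)
    (hBm₁ : Bm * (adjoint R ∘L R + α • 1) = 1) (k : ℕ) :
    Bm ^ (k+1) * (adjoint R ∘L R) = Bm ^ k - α • Bm ^ (k+1) := by
  have hms : ∀ F G : X →L[ℝ] X, F * (α • G) = α • (F * G) := fun F G => by
    ext z
    simp only [ContinuousLinearMap.mul_apply, ContinuousLinearMap.smul_apply, map_smul]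
  have hsm' : Bm * (α • (1 : X →L[ℝ] X)) = α • Bm := by
    rw [hms, mul_one]
  have hf1 : Bm * (adjoint R ∘L R) = 1 - α • Bm := by
    have h := hBm₁; rw [mul_add, hsm'] at h; exact eq_sub_of_add_eq h
  rw [pow_succ, mul_assoc, hf1, mul_sub, mul_one, hms, ← pow_succ]

theorem tik_general (R S : X →L[ℝ] Y) (α : ℝ) (hα : 0 < α) (i : ℕ)
    (h δ : ℝ) (hRS : ‖R - S‖ ≤ h) (x : X) (d : Y) (hd : ‖d‖ ≤ δ)
    (Bm Bhm : X →L[ℝ] X)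
    (hBm₁ : Bm * (adjoint R ∘L R + α • 1) = 1)
    (hBm₂ : (adjoint R ∘L R + α • 1) * Bm = 1)
    (hBhm₁ : Bhm * (adjoint S ∘L S + α • 1) = 1)
    (hBhm₂ : (adjoint S ∘L S + α • 1) * Bhm = 1) :
    ‖x - ∑ k ∈ Finset.range i, α ^ k • (Bhm ^ (k + 1)) (adjoint S (R x - d))‖ ≤
      α ^ i * ‖(Bm ^ i) x‖ +
        ((i : ℝ) * (i + 1) * h * ‖x‖ + (i : ℝ) * δ) / (2 * Real.sqrt α) := by
  have hh0 : 0 ≤ h := le_trans (norm_nonneg _) hRS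
  have hc : (0:ℝ) < 2 * Real.sqrt α := by positivity
  set c : ℝ := 2 * Real.sqrt α with hcdef
  -- pointwise bounds
  have hpowBm : ∀ (k : ℕ) (z : X), α ^ k * ‖(Bm ^ k) z‖ ≤ ‖z‖ :=
    tik_normBpow R α hα Bm hBm₂
  have hpowBhm : ∀ (k : ℕ) (z : X), α ^ k * ‖(Bhm ^ k) z‖ ≤ ‖z‖ :=
    tik_normBpow S α hα Bhm hBhm₂
  have hCapp : ∀ z : X, adjoint R (R (Bm z)) = z - α • Bm z := fun z =>
    eq_sub_of_add_eq (tik_apply R α Bm hBm₂ z)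
  have hCz : ∀ z : X, ‖adjoint R (R (Bm z))‖ ≤ ‖z‖ := fun z => by
    rw [hCapp z]; exact tik_normC R α hα Bm hBm₂ z
  have hRBm : ∀ z : X, c * ‖R (Bm z)‖ ≤ ‖z‖ := tik_normSB R α hα Bm hBm₂
  have hBhmS : ∀ w : Y, c * ‖Bhm (adjoint S w)‖ ≤ ‖w‖ := tik_normBS S α hα Bhm hBhm₂
  have hRmS : ∀ z : X, ‖(R - S) z‖ ≤ h * ‖z‖ := fun z =>
    le_trans ((R - S).le_opNorm z) (mul_le_mul_of_nonneg_right hRS (norm_nonneg z))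
  have hRmS' : ∀ w : Y, ‖adjoint (R - S) w‖ ≤ h * ‖w‖ := fun w => by
    refine le_trans ((adjoint (R - S)).le_opNorm w) ?_
    rw [norm_adjoint_eq]
    exact mul_le_mul_of_nonneg_right hRS (norm_nonneg w)
  have A1 : ∀ (j : ℕ) (v : Y), c * (α ^ j * ‖(Bhm ^ (j+1)) (adjoint S v)‖) ≤ ‖v‖ := by
    intro j v
    have h1 : (Bhm ^ (j+1)) (adjoint S v) = (Bhm ^ j) (Bhm (adjoint S v)) := by
      rw [pow_succ, ContinuousLinearMap.mul_apply]
    calc c * (α ^ j * ‖(Bhm ^ (j+1)) (adjoint S v)‖)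
        = c * (α ^ j * ‖(Bhm ^ j) (Bhm (adjoint S v))‖) := by rw [h1]
    _ ≤ c * ‖Bhm (adjoint S v)‖ := mul_le_mul_of_nonneg_left (hpowBhm j _) hc.le
    _ ≤ ‖v‖ := hBhmS v
  have A2 : ∀ (j : ℕ) (w : X),
      c * (α ^ (j+1) * ‖(Bhm ^ (j+1)) (adjoint (R - S) (R (Bm w)))‖) ≤ h * ‖w‖ := by
    intro j w
    calc c * (α ^ (j+1) * ‖(Bhm ^ (j+1)) (adjoint (R - S) (R (Bm w)))‖)
        ≤ c * ‖adjoint (R - S) (R (Bm w))‖ :=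
          mul_le_mul_of_nonneg_left (hpowBhm (j+1) _) hc.le
    _ ≤ c * (h * ‖R (Bm w)‖) := mul_le_mul_of_nonneg_left (hRmS' _) hc.le
    _ = h * (c * ‖R (Bm w)‖) := by ring
    _ ≤ h * ‖w‖ := mul_le_mul_of_nonneg_left (hRBm w) hh0
  have hKv : ∀ z : X, (adjoint R ∘L R - adjoint S ∘L S) z
      = adjoint S ((R - S) z) + adjoint (R - S) (R z) := by
    intro z
    have hadjsub : adjoint (R - S) = adjoint R - adjoint S := by simp [map_sub]
    rw [hadjsub]
    simp only [ContinuousLinearMap.sub_apply, ContinuousLinearMap.comp_apply, map_sub]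
    abel
  -- per-k bound on the perturbation terms
  have hmid : ∀ k : ℕ,
      c * (α ^ k * ‖(Bm ^ (k+1) * (adjoint R ∘L R) - Bhm ^ (k+1) * (adjoint S ∘L R)) x‖)
        ≤ (2 * (k:ℝ) + 2) * (h * ‖x‖) := by
    intro k
    rw [tik_phi R S α Bm Bhm hBm₂ hBhm₁ hBhm₂ hBm₁ k]
    have B1 : ∀ j ∈ Finset.range k,
        c * (α ^ k * ‖(Bhm ^ (j+1) *
          ((adjoint R ∘L R - adjoint S ∘L S) *
            (Bm ^ (k-j) * ((adjoint R ∘L R) * Bm)))) x‖) ≤ 2 * (h * ‖x‖) := by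
      intro j hj
      have hjk : j < k := Finset.mem_range.mp hj
      have hunf : (Bhm ^ (j+1) * ((adjoint R ∘L R - adjoint S ∘L S) *
            (Bm ^ (k-j) * ((adjoint R ∘L R) * Bm)))) x
          = (Bhm ^ (j+1)) (adjoint S ((R - S) ((Bm ^ (k-j)) (adjoint R (R (Bm x))))))
            + (Bhm ^ (j+1)) (adjoint (R - S) (R ((Bm ^ (k-j)) (adjoint R (R (Bm x)))))) := by
        simp only [ContinuousLinearMap.mul_apply, ContinuousLinearMap.comp_apply]
        rw [hKv, map_add]
      rw [hunf]
      have t1 : c * (α ^ k *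
          ‖(Bhm ^ (j+1)) (adjoint S ((R - S) ((Bm ^ (k-j)) (adjoint R (R (Bm x))))))‖)
          ≤ h * ‖x‖ := by
        have e : α ^ k = α ^ (k-j) * α ^ j := by rw [← pow_add]; congr 1; omega
        calc c * (α ^ k *
            ‖(Bhm ^ (j+1)) (adjoint S ((R - S) ((Bm ^ (k-j)) (adjoint R (R (Bm x))))))‖)
            = α ^ (k-j) * (c * (α ^ j *
              ‖(Bhm ^ (j+1)) (adjoint S ((R - S) ((Bm ^ (k-j)) (adjoint R (R (Bm x))))))‖)) := by
              rw [e]; ring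
        _ ≤ α ^ (k-j) * ‖(R - S) ((Bm ^ (k-j)) (adjoint R (R (Bm x))))‖ :=
              mul_le_mul_of_nonneg_left (A1 j _) (by positivity)
        _ ≤ α ^ (k-j) * (h * ‖(Bm ^ (k-j)) (adjoint R (R (Bm x)))‖) :=
              mul_le_mul_of_nonneg_left (hRmS _) (by positivity)
        _ = h * (α ^ (k-j) * ‖(Bm ^ (k-j)) (adjoint R (R (Bm x)))‖) := by ring
        _ ≤ h * ‖adjoint R (R (Bm x))‖ := mul_le_mul_of_nonneg_left (hpowBm (k-j) _) hh0
        _ ≤ h * ‖x‖ := mul_le_mul_of_nonneg_left (hCz x) hh0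
      have t2 : c * (α ^ k *
          ‖(Bhm ^ (j+1)) (adjoint (R - S) (R ((Bm ^ (k-j)) (adjoint R (R (Bm x))))))‖)
          ≤ h * ‖x‖ := by
        have hww : (Bm ^ (k-j)) (adjoint R (R (Bm x)))
            = Bm ((Bm ^ (k-j-1)) (adjoint R (R (Bm x)))) := by
          have hkj : k - j = (k - j - 1) + 1 := by omega
          conv_lhs => rw [hkj, pow_succ', ContinuousLinearMap.mul_apply]
        have e : α ^ k = α ^ (k-j-1) * α ^ (j+1) := by rw [← pow_add]; congr 1; omega
        calc c * (α ^ k *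
            ‖(Bhm ^ (j+1)) (adjoint (R - S) (R ((Bm ^ (k-j)) (adjoint R (R (Bm x))))))‖)
            = α ^ (k-j-1) * (c * (α ^ (j+1) *
              ‖(Bhm ^ (j+1)) (adjoint (R - S) (R (Bm ((Bm ^ (k-j-1)) (adjoint R (R (Bm x)))))))‖)) := by
              rw [hww, e]; ring
        _ ≤ α ^ (k-j-1) * (h * ‖(Bm ^ (k-j-1)) (adjoint R (R (Bm x)))‖) :=
              mul_le_mul_of_nonneg_left (A2 j _) (by positivity)
        _ = h * (α ^ (k-j-1) * ‖(Bm ^ (k-j-1)) (adjoint R (R (Bm x)))‖) := by ring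
        _ ≤ h * ‖adjoint R (R (Bm x))‖ := mul_le_mul_of_nonneg_left (hpowBm (k-j-1) _) hh0
        _ ≤ h * ‖x‖ := mul_le_mul_of_nonneg_left (hCz x) hh0
      calc c * (α ^ k * ‖(Bhm ^ (j+1)) (adjoint S ((R - S) ((Bm ^ (k-j)) (adjoint R (R (Bm x))))))
              + (Bhm ^ (j+1)) (adjoint (R - S) (R ((Bm ^ (k-j)) (adjoint R (R (Bm x))))))‖)
          ≤ c * (α ^ k *
            (‖(Bhm ^ (j+1)) (adjoint S ((R - S) ((Bm ^ (k-j)) (adjoint R (R (Bm x))))))‖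
              + ‖(Bhm ^ (j+1)) (adjoint (R - S) (R ((Bm ^ (k-j)) (adjoint R (R (Bm x))))))‖)) := by
            have := norm_add_le
              ((Bhm ^ (j+1)) (adjoint S ((R - S) ((Bm ^ (k-j)) (adjoint R (R (Bm x)))))))
              ((Bhm ^ (j+1)) (adjoint (R - S) (R ((Bm ^ (k-j)) (adjoint R (R (Bm x)))))))
            gcongr
      _ = c * (α ^ k * ‖(Bhm ^ (j+1)) (adjoint S ((R - S) ((Bm ^ (k-j)) (adjoint R (R (Bm x))))))‖)
            + c * (α ^ k * ‖(Bhm ^ (j+1)) (adjoint (R - S) (R ((Bm ^ (k-j)) (adjoint R (R (Bm x))))))‖) := by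
            ring
      _ ≤ h * ‖x‖ + h * ‖x‖ := add_le_add t1 t2
      _ = 2 * (h * ‖x‖) := by ring
    have B3 : c * (α ^ k * ‖(Bhm ^ (k+1) * ((adjoint S ∘L (R - S)) * ((adjoint R ∘L R) * Bm))) x‖)
        ≤ h * ‖x‖ := by
      have hunf : (Bhm ^ (k+1) * ((adjoint S ∘L (R - S)) * ((adjoint R ∘L R) * Bm))) x
          = (Bhm ^ (k+1)) (adjoint S ((R - S) (adjoint R (R (Bm x))))) := by
        simp only [ContinuousLinearMap.mul_apply, ContinuousLinearMap.comp_apply]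
      rw [hunf]
      calc c * (α ^ k * ‖(Bhm ^ (k+1)) (adjoint S ((R - S) (adjoint R (R (Bm x)))))‖)
          ≤ ‖(R - S) (adjoint R (R (Bm x)))‖ := A1 k _
      _ ≤ h * ‖adjoint R (R (Bm x))‖ := hRmS _
      _ ≤ h * ‖x‖ := mul_le_mul_of_nonneg_left (hCz x) hh0
    have B4 : c * (α ^ k * (α * ‖(Bhm ^ (k+1) * ((adjoint (R - S) ∘L R) * Bm)) x‖))
        ≤ h * ‖x‖ := by
      have hunf : (Bhm ^ (k+1) * ((adjoint (R - S) ∘L R) * Bm)) x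
          = (Bhm ^ (k+1)) (adjoint (R - S) (R (Bm x))) := by
        simp only [ContinuousLinearMap.mul_apply, ContinuousLinearMap.comp_apply]
      rw [hunf]
      calc c * (α ^ k * (α * ‖(Bhm ^ (k+1)) (adjoint (R - S) (R (Bm x)))‖))
          = c * (α ^ (k+1) * ‖(Bhm ^ (k+1)) (adjoint (R - S) (R (Bm x)))‖) := by
            rw [pow_succ]; ring
      _ ≤ h * ‖x‖ := A2 k x
    have hvec : (-∑ j ∈ Finset.range k, Bhm ^ (j+1) *
          ((adjoint R ∘L R - adjoint S ∘L S) * (Bm ^ (k-j) * ((adjoint R ∘L R) * Bm)))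
        - Bhm ^ (k+1) * ((adjoint S ∘L (R - S)) * ((adjoint R ∘L R) * Bm))
        + α • (Bhm ^ (k+1) * ((adjoint (R - S) ∘L R) * Bm))) x
        = -(∑ j ∈ Finset.range k, (Bhm ^ (j+1) *
            ((adjoint R ∘L R - adjoint S ∘L S) * (Bm ^ (k-j) * ((adjoint R ∘L R) * Bm)))) x)
          - (Bhm ^ (k+1) * ((adjoint S ∘L (R - S)) * ((adjoint R ∘L R) * Bm))) x
          + α • ((Bhm ^ (k+1) * ((adjoint (R - S) ∘L R) * Bm)) x) := by
      simp only [ContinuousLinearMap.add_apply, ContinuousLinearMap.sub_apply,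
        ContinuousLinearMap.neg_apply, ContinuousLinearMap.smul_apply,
        ContinuousLinearMap.sum_apply]
    rw [hvec]
    have hnorm : ‖-(∑ j ∈ Finset.range k, (Bhm ^ (j+1) *
            ((adjoint R ∘L R - adjoint S ∘L S) * (Bm ^ (k-j) * ((adjoint R ∘L R) * Bm)))) x)
          - (Bhm ^ (k+1) * ((adjoint S ∘L (R - S)) * ((adjoint R ∘L R) * Bm))) x
          + α • ((Bhm ^ (k+1) * ((adjoint (R - S) ∘L R) * Bm)) x)‖
        ≤ (∑ j ∈ Finset.range k, ‖(Bhm ^ (j+1) *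
            ((adjoint R ∘L R - adjoint S ∘L S) * (Bm ^ (k-j) * ((adjoint R ∘L R) * Bm)))) x‖)
          + ‖(Bhm ^ (k+1) * ((adjoint S ∘L (R - S)) * ((adjoint R ∘L R) * Bm))) x‖
          + α * ‖(Bhm ^ (k+1) * ((adjoint (R - S) ∘L R) * Bm)) x‖ := by
      refine le_trans (norm_add_le _ _) ?_
      have h1 := norm_sub_le
        (-(∑ j ∈ Finset.range k, (Bhm ^ (j+1) *
            ((adjoint R ∘L R - adjoint S ∘L S) * (Bm ^ (k-j) * ((adjoint R ∘L R) * Bm)))) x))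
        ((Bhm ^ (k+1) * ((adjoint S ∘L (R - S)) * ((adjoint R ∘L R) * Bm))) x)
      rw [norm_neg] at h1
      have h2 := norm_sum_le (Finset.range k) (fun j => (Bhm ^ (j+1) *
            ((adjoint R ∘L R - adjoint S ∘L S) * (Bm ^ (k-j) * ((adjoint R ∘L R) * Bm)))) x)
      have h3 : ‖α • ((Bhm ^ (k+1) * ((adjoint (R - S) ∘L R) * Bm)) x)‖
          = α * ‖(Bhm ^ (k+1) * ((adjoint (R - S) ∘L R) * Bm)) x‖ := by
        rw [norm_smul, Real.norm_eq_abs, abs_of_pos hα]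
      rw [h3]
      have := le_trans h1 (add_le_add_left h2 _)
      linarith
    calc c * (α ^ k * ‖-(∑ j ∈ Finset.range k, (Bhm ^ (j+1) *
            ((adjoint R ∘L R - adjoint S ∘L S) * (Bm ^ (k-j) * ((adjoint R ∘L R) * Bm)))) x)
          - (Bhm ^ (k+1) * ((adjoint S ∘L (R - S)) * ((adjoint R ∘L R) * Bm))) x
          + α • ((Bhm ^ (k+1) * ((adjoint (R - S) ∘L R) * Bm)) x)‖)
        ≤ c * (α ^ k * ((∑ j ∈ Finset.range k, ‖(Bhm ^ (j+1) *
            ((adjoint R ∘L R - adjoint S ∘L S) * (Bm ^ (k-j) * ((adjoint R ∘L R) * Bm)))) x‖)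
          + ‖(Bhm ^ (k+1) * ((adjoint S ∘L (R - S)) * ((adjoint R ∘L R) * Bm))) x‖
          + α * ‖(Bhm ^ (k+1) * ((adjoint (R - S) ∘L R) * Bm)) x‖)) := by gcongr
    _ = (∑ j ∈ Finset.range k, c * (α ^ k * ‖(Bhm ^ (j+1) *
            ((adjoint R ∘L R - adjoint S ∘L S) * (Bm ^ (k-j) * ((adjoint R ∘L R) * Bm)))) x‖))
          + c * (α ^ k * ‖(Bhm ^ (k+1) * ((adjoint S ∘L (R - S)) * ((adjoint R ∘L R) * Bm))) x‖)
          + c * (α ^ k * (α * ‖(Bhm ^ (k+1) * ((adjoint (R - S) ∘L R) * Bm)) x‖)) := by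
        have hdist : c * (α ^ k * (∑ j ∈ Finset.range k, ‖(Bhm ^ (j+1) *
            ((adjoint R ∘L R - adjoint S ∘L S) * (Bm ^ (k-j) * ((adjoint R ∘L R) * Bm)))) x‖))
            = ∑ j ∈ Finset.range k, c * (α ^ k * ‖(Bhm ^ (j+1) *
            ((adjoint R ∘L R - adjoint S ∘L S) * (Bm ^ (k-j) * ((adjoint R ∘L R) * Bm)))) x‖) := by
          rw [Finset.mul_sum, Finset.mul_sum]
        rw [← hdist]
        ring
    _ ≤ (∑ j ∈ Finset.range k, 2 * (h * ‖x‖)) + h * ‖x‖ + h * ‖x‖ :=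
        add_le_add (add_le_add (Finset.sum_le_sum B1) B3) B4
    _ = (2 * (k:ℝ) + 2) * (h * ‖x‖) := by
        rw [Finset.sum_const, Finset.card_range, nsmul_eq_mul]
        ring
  -- exact (telescoping) part
  have hstep1 := tik_step1 R α Bm hBm₁
  have hexact : x - ∑ k ∈ Finset.range i, α ^ k • ((Bm ^ (k+1)) ((adjoint R ∘L R) x))
      = α ^ i • ((Bm ^ i) x) := by
    have hterm : ∀ k : ℕ, α ^ k • ((Bm ^ (k+1)) ((adjoint R ∘L R) x))
        = α ^ k • ((Bm ^ k) x) - α ^ (k+1) • ((Bm ^ (k+1)) x) := by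
      intro k
      have e : (Bm ^ (k+1)) ((adjoint R ∘L R) x) = (Bm ^ (k+1) * (adjoint R ∘L R)) x :=
        (ContinuousLinearMap.mul_apply _ _ _).symm
      rw [e, hstep1 k, ContinuousLinearMap.sub_apply, ContinuousLinearMap.smul_apply,
        smul_sub, smul_smul, ← pow_succ]
    rw [Finset.sum_congr rfl (fun k _ => hterm k),
      Finset.sum_range_sub' (fun k => α ^ k • ((Bm ^ k) x)) i]
    simp only [pow_zero, one_smul, ContinuousLinearMap.one_apply]
    rw [sub_sub_cancel]
  -- decomposition of the error
  have hsplit : x - ∑ k ∈ Finset.range i, α ^ k • (Bhm ^ (k + 1)) (adjoint S (R x - d))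
      = (x - ∑ k ∈ Finset.range i, α ^ k • ((Bm ^ (k+1)) ((adjoint R ∘L R) x)))
        + ∑ k ∈ Finset.range i,
            α ^ k • ((Bm ^ (k+1) * (adjoint R ∘L R) - Bhm ^ (k+1) * (adjoint S ∘L R)) x)
        + ∑ k ∈ Finset.range i, α ^ k • ((Bhm ^ (k+1)) (adjoint S d)) := by
    have h1 : ∀ k ∈ Finset.range i, α ^ k • (Bhm ^ (k + 1)) (adjoint S (R x - d))
        = α ^ k • ((Bhm ^ (k+1) * (adjoint S ∘L R)) x)
          - α ^ k • ((Bhm ^ (k+1)) (adjoint S d)) := by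
      intro k _
      rw [map_sub, map_sub, smul_sub]
      simp only [ContinuousLinearMap.mul_apply, ContinuousLinearMap.comp_apply]
    have h2 : ∀ k ∈ Finset.range i,
        α ^ k • ((Bm ^ (k+1) * (adjoint R ∘L R) - Bhm ^ (k+1) * (adjoint S ∘L R)) x)
        = α ^ k • ((Bm ^ (k+1)) ((adjoint R ∘L R) x))
          - α ^ k • ((Bhm ^ (k+1) * (adjoint S ∘L R)) x) := by
      intro k _
      rw [ContinuousLinearMap.sub_apply, smul_sub, ContinuousLinearMap.mul_apply]
    rw [Finset.sum_congr rfl h1, Finset.sum_congr rfl h2, Finset.sum_sub_distrib,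
      Finset.sum_sub_distrib]
    abel
  rw [hsplit]
  have hT0 : ‖x - ∑ k ∈ Finset.range i, α ^ k • ((Bm ^ (k+1)) ((adjoint R ∘L R) x))‖
      = α ^ i * ‖(Bm ^ i) x‖ := by
    rw [hexact, norm_smul, Real.norm_eq_abs, abs_of_pos (pow_pos hα i)]
  have hTd : ‖∑ k ∈ Finset.range i, α ^ k • ((Bhm ^ (k+1)) (adjoint S d))‖
      ≤ (i:ℝ) * (δ / c) := by
    refine le_trans (norm_sum_le _ _) ?_
    have hb : ∀ k ∈ Finset.range i, ‖α ^ k • ((Bhm ^ (k+1)) (adjoint S d))‖ ≤ δ / c := by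
      intro k _
      rw [norm_smul, Real.norm_eq_abs, abs_of_pos (pow_pos hα k), le_div_iff₀ hc]
      calc α ^ k * ‖(Bhm ^ (k+1)) (adjoint S d)‖ * c
          = c * (α ^ k * ‖(Bhm ^ (k+1)) (adjoint S d)‖) := by ring
      _ ≤ ‖d‖ := A1 k d
      _ ≤ δ := hd
    refine le_trans (Finset.sum_le_sum hb) ?_
    rw [Finset.sum_const, Finset.card_range, nsmul_eq_mul]
  have hTmid : ‖∑ k ∈ Finset.range i,
        α ^ k • ((Bm ^ (k+1) * (adjoint R ∘L R) - Bhm ^ (k+1) * (adjoint S ∘L R)) x)‖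
      ≤ ((i:ℝ) * (i+1)) * ((h * ‖x‖) / c) := by
    refine le_trans (norm_sum_le _ _) ?_
    have hb : ∀ k ∈ Finset.range i,
        ‖α ^ k • ((Bm ^ (k+1) * (adjoint R ∘L R) - Bhm ^ (k+1) * (adjoint S ∘L R)) x)‖
        ≤ (2*(k:ℝ)+2) * ((h * ‖x‖) / c) := by
      intro k _
      rw [norm_smul, Real.norm_eq_abs, abs_of_pos (pow_pos hα k),
        show (2*(k:ℝ)+2) * ((h * ‖x‖) / c) = ((2*(k:ℝ)+2) * (h * ‖x‖)) / c from by ring,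
        le_div_iff₀ hc]
      calc α ^ k * ‖(Bm ^ (k+1) * (adjoint R ∘L R) - Bhm ^ (k+1) * (adjoint S ∘L R)) x‖ * c
          = c * (α ^ k * ‖(Bm ^ (k+1) * (adjoint R ∘L R) - Bhm ^ (k+1) * (adjoint S ∘L R)) x‖) := by
            ring
      _ ≤ (2*(k:ℝ)+2) * (h * ‖x‖) := hmid k
    refine le_trans (Finset.sum_le_sum hb) ?_
    have hsum : ∑ k ∈ Finset.range i, ((2*(k:ℝ)+2) * ((h * ‖x‖) / c))
        = ((i:ℝ)*(i+1)) * ((h * ‖x‖)/c) := by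
      have hgauss : ∀ n : ℕ, ∑ k ∈ Finset.range n, (2*(k:ℝ)+2) = (n:ℝ)*(n+1) := by
        intro n
        induction n with
        | zero => simp
        | succ m ih =>
          rw [Finset.sum_range_succ, ih]
          push_cast
          ring
      rw [← Finset.sum_mul, hgauss i]
    rw [hsum]
  calc ‖(x - ∑ k ∈ Finset.range i, α ^ k • ((Bm ^ (k+1)) ((adjoint R ∘L R) x)))
        + ∑ k ∈ Finset.range i,
            α ^ k • ((Bm ^ (k+1) * (adjoint R ∘L R) - Bhm ^ (k+1) * (adjoint S ∘L R)) x)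
        + ∑ k ∈ Finset.range i, α ^ k • ((Bhm ^ (k+1)) (adjoint S d))‖
      ≤ ‖(x - ∑ k ∈ Finset.range i, α ^ k • ((Bm ^ (k+1)) ((adjoint R ∘L R) x)))
        + ∑ k ∈ Finset.range i,
            α ^ k • ((Bm ^ (k+1) * (adjoint R ∘L R) - Bhm ^ (k+1) * (adjoint S ∘L R)) x)‖
        + ‖∑ k ∈ Finset.range i, α ^ k • ((Bhm ^ (k+1)) (adjoint S d))‖ := norm_add_le _ _
  _ ≤ (‖x - ∑ k ∈ Finset.range i, α ^ k • ((Bm ^ (k+1)) ((adjoint R ∘L R) x))‖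
        + ‖∑ k ∈ Finset.range i,
            α ^ k • ((Bm ^ (k+1) * (adjoint R ∘L R) - Bhm ^ (k+1) * (adjoint S ∘L R)) x)‖)
        + ‖∑ k ∈ Finset.range i, α ^ k • ((Bhm ^ (k+1)) (adjoint S d))‖ :=
      add_le_add_left (norm_add_le _ _) _
  _ ≤ (α ^ i * ‖(Bm ^ i) x‖ + ((i:ℝ) * (i+1)) * ((h * ‖x‖) / c)) + (i:ℝ) * (δ / c) :=
      add_le_add (add_le_add (le_of_eq hT0) hTmid) hTd
  _ = α ^ i * ‖(Bm ^ i) x‖ + ((i : ℝ) * (i + 1) * h * ‖x‖ + (i : ℝ) * δ) / c := by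
      rw [add_assoc]
      congr 1
      field_simp

end helpers

open ContinuousLinearMap in
/-- Lemma A.2 of the paper: under Assumptions A.1
(`Wₘ ⊆ cl(Range T)`, `Range(Qₘ Tₕ) = Wₘ`, `‖Qₘ(T − Tₕ)‖ ≤ h`, `‖Qₘ(y − yδ)‖ ≤ δ`),
the fully discretized iterated Tikhonov approximation built from `T_{h,m} := Qₘ Tₕ` and
data `yδ` satisfies
`‖x† − x_{α,m,i}^{δ,h}‖ ≤ αⁱ ‖(Tₘ*Tₘ + αI)⁻ⁱ x†‖ + (i(i+1) h ‖x†‖ + i δ)/(2√α)`,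
where `Tₘ := Qₘ T`. -/
theorem iterated_tikhonov_total_error_bound
    {X Y : Type*} [NormedAddCommGroup X] [InnerProductSpace ℝ X] [CompleteSpace X]
    [NormedAddCommGroup Y] [InnerProductSpace ℝ Y] [CompleteSpace Y]
    (T Th : X →L[ℝ] Y) (α : ℝ) (hα : 0 < α) (i : ℕ) (hi : 1 ≤ i)
    (h δ : ℝ) (hh0 : 0 ≤ h) (hδ0 : 0 ≤ δ) (y yδ : Y) (xdag : X)
    (W : Submodule ℝ Y) [FiniteDimensional ℝ W]
    (Qm Q : Y →L[ℝ] Y)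
    (hQm : Qm = W.subtypeL ∘L W.orthogonalProjectionOnto)
    (hQ : Q = (LinearMap.range (T : X →ₗ[ℝ] Y)).topologicalClosure.subtypeL ∘L
      (LinearMap.range (T : X →ₗ[ℝ] Y)).topologicalClosure.orthogonalProjectionOnto)
    (hW : W ≤ (LinearMap.range (T : X →ₗ[ℝ] Y)).topologicalClosure)
    (hrange : LinearMap.range ((Qm ∘L Th : X →L[ℝ] Y) : X →ₗ[ℝ] Y) = W)
    (hTh : ‖Qm ∘L (T - Th)‖ ≤ h)
    (hyδ : ‖Qm (y - yδ)‖ ≤ δ)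
    (hxdag : T xdag = Q y)
    (Bm Bhm : X →L[ℝ] X)
    (hBm₁ : Bm * (adjoint (Qm ∘L T) ∘L (Qm ∘L T) + α • 1) = 1)
    (hBm₂ : (adjoint (Qm ∘L T) ∘L (Qm ∘L T) + α • 1) * Bm = 1)
    (hBhm₁ : Bhm * (adjoint (Qm ∘L Th) ∘L (Qm ∘L Th) + α • 1) = 1)
    (hBhm₂ : (adjoint (Qm ∘L Th) ∘L (Qm ∘L Th) + α • 1) * Bhm = 1) :
    ‖xdag - ∑ k ∈ Finset.range i, α ^ k • (Bhm ^ (k + 1)) (adjoint (Qm ∘L Th) yδ)‖ ≤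
      α ^ i * ‖(Bm ^ i) xdag‖ +
        ((i : ℝ) * (i + 1) * h * ‖xdag‖ + (i : ℝ) * δ) / (2 * Real.sqrt α) := by
  have hQmQm : ∀ z : Y, Qm (Qm z) = Qm z := by
    intro z
    rw [hQm]
    simp [ContinuousLinearMap.comp_apply, Submodule.subtypeL_apply,
      Submodule.orthogonalProjectionOnto_mem_subspace_eq_self]
    exact congrArg (fun f : Y →L[ℝ] Y => f z) W.isIdempotentElem_starProjection
  have hQmadj : adjoint Qm = Qm := by
    have hsa := isSelfAdjoint_starProjection W
    rw [hQm, ← ContinuousLinearMap.star_eq_adjoint]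
    exact hsa
  have hQmQ : ∀ z : Y, Qm (Q z) = Qm z := by
    intro z
    have hmem : z - Q z ∈ ((LinearMap.range (T : X →ₗ[ℝ] Y)).topologicalClosure)ᗮ := by
      rw [hQ]
      simpa using Submodule.sub_starProjection_mem_orthogonal
        (K := (LinearMap.range (T : X →ₗ[ℝ] Y)).topologicalClosure) z
    have hmem' : z - Q z ∈ Wᗮ := Submodule.orthogonal_le hW hmem
    have hz : Qm (z - Q z) = 0 := by
      rw [hQm]
      simp [ContinuousLinearMap.comp_apply,
        Submodule.orthogonalProjectionOnto_apply_of_mem_orthogonal hmem']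
    have h2 : Qm z - Qm (Q z) = 0 := by rw [← map_sub]; exact hz
    exact (sub_eq_zero.mp h2).symm
  have hRx : (Qm ∘L T) xdag = Qm y := by
    rw [ContinuousLinearMap.comp_apply, hxdag, hQmQ y]
  have hSd : adjoint (Qm ∘L Th) yδ
      = adjoint (Qm ∘L Th) ((Qm ∘L T) xdag - Qm (y - yδ)) := by
    have hv : (Qm ∘L T) xdag - Qm (y - yδ) = Qm yδ := by
      rw [hRx, map_sub]
      abel
    rw [hv, adjoint_comp, hQmadj]
    simp only [ContinuousLinearMap.comp_apply, hQmQm yδ]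
  have hRS : ‖(Qm ∘L T) - (Qm ∘L Th)‖ ≤ h := by
    have e : (Qm ∘L T) - (Qm ∘L Th) = Qm ∘L (T - Th) := by
      rw [ContinuousLinearMap.comp_sub]
    rw [e]
    exact hTh
  have hmain := tik_general (Qm ∘L T) (Qm ∘L Th) α hα i h δ hRS xdag
    (Qm (y - yδ)) hyδ Bm Bhm hBm₁ hBm₂ hBhm₁ hBhm₂
  rw [hSd]
  exact hmain
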